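/- Let φ : ℝ → ℂ be an even Schwartz function whose Fourier transform φ̂(y) = ∫_ℝ φ(x) e^{−2πixy} dx is supported inside [−1, 1]. Then ∫_ℝ φ(x) · (1 − sin(2πx)/(2πx)) dx = ∫_ℝ φ(x) dx − φ(0)/2, where the integrand's value at x = 0 is interpreted via sin(2πx)/(2πx) = 1 at x = 0. Equivalently, the symplectic density W_Sp(x) = 1 − sin(2πx)/(2πx) agrees with the distribution 1 − (1/2)δ_0 on such test functions. -/

import Mathlib

open FourierTransform MeasureTheory Real

/-- The symplectic density `W_Sp(x) = 1 - sin(2πx)/(2πx)`, with the value at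
`x = 0` interpreted via `sin(2πx)/(2πx) = 1` at `x = 0`. -/
noncomputable def WSp (x : ℝ) : ℝ :=
  if x = 0 then 0 else 1 - Real.sin (2 * π * x) / (2 * π * x)

/-- The indicator function of `[-1, 1]`, whose Fourier transform is `sin(2πx)/(πx)`. -/
noncomputable def WSpAux : ℝ → ℂ := Set.indicator (Set.Icc (-1:ℝ) 1) (fun _ => (1:ℂ))

lemma WSpAux_int : Integrable WSpAux := by
  rw [WSpAux, integrable_indicator_iff measurableSet_Icc]
  exact integrableOn_const (by simp)

lemma fourier_WSpAux (x : ℝ) (hx : x ≠ 0) :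
    𝓕 WSpAux x = ((Real.sin (2 * π * x) / (π * x) : ℝ) : ℂ) := by
  have hc : ((-2 * π * x : ℝ) : ℂ) * Complex.I ≠ 0 := by
    simp [Complex.ext_iff, pi_ne_zero, hx]
  rw [Real.fourier_real_eq_integral_exp_smul]
  have h1 : ∀ v : ℝ, Complex.exp (↑(-2 * π * v * x) * Complex.I) • WSpAux v
      = Set.indicator (Set.Icc (-1:ℝ) 1)
          (fun v : ℝ => Complex.exp ((((-2 * π * x : ℝ)) : ℂ) * Complex.I * v)) v := by
    intro v
    by_cases hv : v ∈ Set.Icc (-1:ℝ) 1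
    · simp only [WSpAux, Set.indicator_of_mem hv, smul_eq_mul, mul_one]
      congr 1
      push_cast
      ring
    · simp [WSpAux, Set.indicator_of_notMem hv]
  simp_rw [h1]
  rw [integral_indicator measurableSet_Icc, integral_Icc_eq_integral_Ioc,
    ← intervalIntegral.integral_of_le (by norm_num : (-1:ℝ) ≤ 1),
    integral_exp_mul_complex hc]
  rw [Complex.ofReal_div, Complex.ofReal_sin, Complex.sin]
  push_cast
  field_simp
  ring_nf
  rw [Complex.exp_neg]
  field_simp
  ring_nf
  rw [Complex.I_sq]
  ring

/-- For an even Schwartz function `φ` with `φ̂` supported inside `[-1, 1]`,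
`∫ φ(x) (1 - sin(2πx)/(2πx)) dx = ∫ φ(x) dx - φ(0)/2`; i.e. `W_Sp` agrees with
the distribution `1 - (1/2)δ₀` on such test functions. -/
theorem integral_WSp_eq (φ : SchwartzMap ℝ ℂ) (heven : ∀ x : ℝ, φ (-x) = φ x)
    (hsupp : Function.support (𝓕 (fun x : ℝ => φ x)) ⊆ Set.Icc (-1) 1) :
    ∫ x : ℝ, φ x * (WSp x : ℂ) = (∫ x : ℝ, φ x) - φ 0 / 2 := by
  have hφint : Integrable (fun x : ℝ => φ x) := φ.integrable
  have hFint : Integrable (𝓕 (fun x : ℝ => φ x)) := by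
    have := (SchwartzMap.fourierTransformCLM ℝ φ).integrable (μ := volume)
    exact this
  -- multiplication formula
  have hflip : (innerₗ ℝ).flip = innerₗ ℝ := by
    apply LinearMap.ext; intro x; apply LinearMap.ext; intro y
    exact real_inner_comm x y
  have key : ∫ ξ, (𝓕 (fun x : ℝ => φ x) ξ) • WSpAux ξ = ∫ x, φ x • 𝓕 WSpAux x := by
    have := VectorFourier.integral_fourierIntegral_smul_eq_flip
      (e := Real.fourierChar) (L := innerₗ ℝ) (μ := volume) (ν := volume)
      Real.continuous_fourierChar continuous_inner hφint WSpAux_int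
    rw [hflip] at this
    exact this
  -- ∫ 𝓕φ • WSpAux = ∫ 𝓕φ = φ 0
  have hsub : ∫ ξ, (𝓕 (fun x : ℝ => φ x) ξ) • WSpAux ξ = ∫ ξ, 𝓕 (fun x : ℝ => φ x) ξ := by
    have h1 : ∀ ξ : ℝ, (𝓕 (fun x : ℝ => φ x) ξ) • WSpAux ξ
        = Set.indicator (Set.Icc (-1:ℝ) 1) (fun ξ => 𝓕 (fun x : ℝ => φ x) ξ) ξ := by
      intro ξ
      by_cases hξ : ξ ∈ Set.Icc (-1:ℝ) 1
      · simp [WSpAux, Set.indicator_of_mem hξ]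
      · simp [WSpAux, Set.indicator_of_notMem hξ]
    simp_rw [h1]
    rw [integral_indicator measurableSet_Icc]
    exact setIntegral_eq_integral_of_forall_compl_eq_zero
      (fun ξ hξ => Function.notMem_support.1 (fun h => hξ (hsupp h)))
  have hinv : ∫ ξ, 𝓕 (fun x : ℝ => φ x) ξ = φ 0 := by
    have h := φ.continuous.fourierInv_fourier_eq hφint hFint
    have h0 := congrFun h 0
    rw [Real.fourierInv_eq'] at h0
    simpa using h0
  have hmain : ∫ x, φ x * 𝓕 WSpAux x = φ 0 := by
    have := key.symm.trans (hsub.trans hinv)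
    simpa [smul_eq_mul] using this
  -- integrability of φ * 𝓕 WSpAux
  have hFgcont : Continuous (𝓕 WSpAux) :=
    VectorFourier.fourierIntegral_continuous Real.continuous_fourierChar continuous_inner WSpAux_int
  have hFGint : Integrable (fun x : ℝ => φ x * 𝓕 WSpAux x) := by
    have := hφint.bdd_mul hFgcont.aestronglyMeasurable
      (c := ∫ x, ‖WSpAux x‖) (Filter.Eventually.of_forall fun w =>
        VectorFourier.norm_fourierIntegral_le_integral_norm _ _ _ _ _)
    simpa [Pi.mul_def, mul_comm] using this
  -- a.e. identity
  have hae : ∀ᵐ x : ℝ, φ x * (WSp x : ℂ) = φ x - (φ x * 𝓕 WSpAux x) / 2 := by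
    have h0 : ∀ᵐ x : ℝ, x ≠ 0 := by
      rw [ae_iff]
      simp [Set.setOf_eq_eq_singleton']
    filter_upwards [h0] with x hx
    rw [fourier_WSpAux x hx, WSp, if_neg hx]
    have hπ : (π : ℂ) ≠ 0 := by exact_mod_cast pi_ne_zero
    have hxc : (x : ℂ) ≠ 0 := by exact_mod_cast hx
    push_cast
    field_simp
  rw [integral_congr_ae hae, integral_sub hφint (hFGint.div_const 2),
    integral_div, hmain]
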